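/- Let u : ℝ³ → ℝ be Euclidean C²-smooth and x a non-characteristic point of Σ = {u = 0}. Define for L > 0 the Gaussian curvature of Σ at x associated to the first Schouten–Van Kampen affine connection by K^{Σ,∇}(L) = −(L/2)·r̄_L² + h₁₁h₂₂ − h₁₂h₂₁, with h₁₁ = (l/l_L)(X₁(p̄)+X₂(q̄)), h₁₂ = −(l_L/l)(q̄X₁(r̄_L) − p̄X₂(r̄_L)), h₂₁ = −(l_L/l)(q̄X₁(r̄_L) − p̄X₂(r̄_L)) − (√L/2) − (√L/2)r̄_L², h₂₂ = −(l²/l_L²)(r̄_L p̄ X₁(r/l) + r̄_L q̄ X₂(r/l)) + L^{−1/2}X₃(r̄_L). Then K^{Σ,∇}(L) = K^{Σ,∇,∞} + O(L^{−1/2}) as L → +∞, i.e. there exist C ≥ 0 and L₀ > 0 such that |K^{Σ,∇}(L) − K^{Σ,∇,∞}| ≤ C·L^{−1/2} for all L ≥ L₀, where K^{Σ,∇,∞} = −½( q̄X₁(u_{x₃}/l) − p̄X₂(u_{x₃}/l) ) − u_{x₃}²/(2l²) (all quantities evaluated at x). -/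

import Mathlib

open Filter Real Topology

/-- The horizontal vector field `X₁ = ∂_{x₁} - (x₂/2)∂_{x₃}` acting on a function. -/
noncomputable def X1 (f : ℝ → ℝ → ℝ → ℝ) (x y z : ℝ) : ℝ :=
  deriv (fun s => f s y z) x - (y / 2) * deriv (fun s => f x y s) z

/-- The horizontal vector field `X₂ = ∂_{x₂} + (x₁/2)∂_{x₃}` acting on a function. -/
noncomputable def X2 (f : ℝ → ℝ → ℝ → ℝ) (x y z : ℝ) : ℝ :=
  deriv (fun s => f x s z) y + (x / 2) * deriv (fun s => f x y s) z

/-- The vertical vector field `X₃ = ∂_{x₃}` acting on a function. -/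
noncomputable def X3 (f : ℝ → ℝ → ℝ → ℝ) (x y z : ℝ) : ℝ :=
  deriv (fun s => f x y s) z

section aux

noncomputable def eF (p q t σ : ℝ) : ℝ := p^2 + q^2 + σ^2 * t^2
noncomputable def gF (p q t σ : ℝ) : ℝ := Real.sqrt (eF p q t σ)
noncomputable def DF (p q t p' q' t' σ : ℝ) : ℝ :=
  (t' * eF p q t σ - t * (p*p' + q*q' + σ^2*t*t')) / (eF p q t σ * gF p q t σ)
noncomputable def WF (p q t pa qa ta p3 q3 t3 co σ : ℝ) : ℝ :=
  DF p q t pa qa ta σ + co * DF p q t p3 q3 t3 σ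
noncomputable def MF (p q t l0 pb0 qb0 xx yy p1 q1 t1 p2 q2 t2 p3 q3 t3 σ : ℝ) : ℝ :=
  -(gF p q t σ / l0) * (qb0 * WF p q t p1 q1 t1 p3 q3 t3 (-(yy/2)) σ
    - pb0 * WF p q t p2 q2 t2 p3 q3 t3 (xx/2) σ)
noncomputable def NF (p q t l0 pb0 qb0 xx yy p1 q1 t1 p2 q2 t2 p3 q3 t3 σ : ℝ) : ℝ :=
  -(l0^2 * t / (eF p q t σ * gF p q t σ)) * (pb0 * WF p q t p1 q1 t1 p3 q3 t3 (-(yy/2)) 0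
    + qb0 * WF p q t p2 q2 t2 p3 q3 t3 (xx/2) 0) + DF p q t p3 q3 t3 σ
noncomputable def PsiF (p q t l0 A pb0 qb0 xx yy p1 q1 t1 p2 q2 t2 p3 q3 t3 σ : ℝ) : ℝ :=
  -t^2 / (2 * eF p q t σ)
  + (l0 / gF p q t σ * A) * (σ^2 * NF p q t l0 pb0 qb0 xx yy p1 q1 t1 p2 q2 t2 p3 q3 t3 σ)
  - (σ^2 * (MF p q t l0 pb0 qb0 xx yy p1 q1 t1 p2 q2 t2 p3 q3 t3 σ)^2
     - MF p q t l0 pb0 qb0 xx yy p1 q1 t1 p2 q2 t2 p3 q3 t3 σ / 2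
     - σ^2 * MF p q t l0 pb0 qb0 xx yy p1 q1 t1 p2 q2 t2 p3 q3 t3 σ * t^2 / (2 * eF p q t σ))

variable {p q t l0 A pb0 qb0 xx yy p1 q1 t1 p2 q2 t2 p3 q3 t3 : ℝ}

lemma eF_pos (hpq : 0 < p^2 + q^2) (t σ : ℝ) : 0 < eF p q t σ :=
  add_pos_of_pos_of_nonneg hpq (by positivity)

lemma gF_pos (hpq : 0 < p^2 + q^2) (t σ : ℝ) : 0 < gF p q t σ :=
  Real.sqrt_pos.2 (eF_pos hpq t σ)

lemma gF_sq (hpq : 0 < p^2 + q^2) (t σ : ℝ) : gF p q t σ ^ 2 = eF p q t σ :=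
  Real.sq_sqrt (eF_pos hpq t σ).le

lemma diff_eF : Differentiable ℝ (eF p q t) := by
  unfold eF; fun_prop

lemma diff_gF (hpq : 0 < p^2 + q^2) : Differentiable ℝ (gF p q t) := by
  intro σ
  exact ((Real.hasDerivAt_sqrt (eF_pos hpq t σ).ne').comp σ
    (diff_eF σ).hasDerivAt).differentiableAt

lemma diff_DF (hpq : 0 < p^2 + q^2) : Differentiable ℝ (DF p q t p1 q1 t1) := by
  unfold DF
  apply Differentiable.div
  · apply Differentiable.sub
    · exact diff_eF.const_mul t1
    · apply Differentiable.const_mul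
      fun_prop
  · exact diff_eF.mul (diff_gF hpq)
  · intro σ
    exact (mul_pos (eF_pos hpq t σ) (gF_pos hpq t σ)).ne'

lemma diff_WF (hpq : 0 < p^2 + q^2) (co : ℝ) :
    Differentiable ℝ (WF p q t p1 q1 t1 p3 q3 t3 co) := by
  unfold WF
  exact (diff_DF hpq).add ((diff_DF hpq).const_mul co)

lemma diff_MF (hpq : 0 < p^2 + q^2) :
    Differentiable ℝ (MF p q t l0 pb0 qb0 xx yy p1 q1 t1 p2 q2 t2 p3 q3 t3) := by
  unfold MF
  exact (((diff_gF hpq).div_const l0).neg).mul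
    (((diff_WF hpq _).const_mul qb0).sub ((diff_WF hpq _).const_mul pb0))

lemma diff_NF (hpq : 0 < p^2 + q^2) :
    Differentiable ℝ (NF p q t l0 pb0 qb0 xx yy p1 q1 t1 p2 q2 t2 p3 q3 t3) := by
  unfold NF
  apply Differentiable.add _ (diff_DF hpq)
  apply Differentiable.mul_const
  apply Differentiable.neg
  apply Differentiable.div (differentiable_const _) (diff_eF.mul (diff_gF hpq))
  intro σ
  exact (mul_pos (eF_pos hpq t σ) (gF_pos hpq t σ)).ne'

lemma diff_PsiF (hpq : 0 < p^2 + q^2) :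
    Differentiable ℝ (PsiF p q t l0 A pb0 qb0 xx yy p1 q1 t1 p2 q2 t2 p3 q3 t3) := by
  unfold PsiF
  have hene : ∀ σ : ℝ, 2 * eF p q t σ ≠ 0 := fun σ => by
    have := eF_pos (t := t) (σ := σ) hpq; positivity
  apply Differentiable.sub
  · apply Differentiable.add
    · exact Differentiable.div (differentiable_const _) (diff_eF.const_mul 2) hene
    · apply Differentiable.mul
      · apply Differentiable.mul_const
        apply Differentiable.div (differentiable_const _) (diff_gF hpq)
        intro σ; exact (gF_pos hpq t σ).ne'
      · exact (differentiable_id.pow 2).mul (diff_NF hpq)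
  · apply Differentiable.sub
    · apply Differentiable.sub
      · exact (differentiable_id.pow 2).mul ((diff_MF hpq).pow 2)
      · exact (diff_MF hpq).div_const 2
    · apply Differentiable.div _ (diff_eF.const_mul 2) hene
      exact ((differentiable_id.pow 2).mul (diff_MF hpq)).mul_const _

lemma PsiF_zero (hpq : 0 < p^2 + q^2) (hl0 : l0 = Real.sqrt (p^2 + q^2)) :
    PsiF p q t l0 A pb0 qb0 xx yy p1 q1 t1 p2 q2 t2 p3 q3 t3 0
      = -(1/2) * (qb0 * WF p q t p1 q1 t1 p3 q3 t3 (-(yy/2)) 0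
          - pb0 * WF p q t p2 q2 t2 p3 q3 t3 (xx/2) 0)
        - t^2 / (2 * (p^2 + q^2)) := by
  have he0 : eF p q t 0 = p^2 + q^2 := by unfold eF; ring
  have hg0 : gF p q t 0 = l0 := by unfold gF; rw [he0, ← hl0]
  have hl0ne : l0 ≠ 0 := by rw [hl0]; exact (Real.sqrt_pos.2 hpq).ne'
  unfold PsiF MF
  rw [hg0, he0]
  field_simp
  ring

lemma hasDerivAt_H {P Q T : ℝ → ℝ} {p' q' t' w : ℝ} (c : ℝ)
    (hP : HasDerivAt P p' w) (hQ : HasDerivAt Q q' w) (hT : HasDerivAt T t' w)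
    (hpq : 0 < P w ^ 2 + Q w ^ 2) :
    HasDerivAt (fun s => T s / Real.sqrt (P s ^ 2 + Q s ^ 2 + c ^ 2 * T s ^ 2))
      (DF (P w) (Q w) (T w) p' q' t' c) w := by
  have hEpos : (0:ℝ) < P w ^ 2 + Q w ^ 2 + c ^ 2 * T w ^ 2 :=
    add_pos_of_pos_of_nonneg hpq (by positivity)
  have hE : HasDerivAt (fun s => P s ^ 2 + Q s ^ 2 + c ^ 2 * T s ^ 2)
      ((2 * P w ^ 1 * p' + 2 * Q w ^ 1 * q') + c ^ 2 * (2 * T w ^ 1 * t')) w := by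
    exact ((hP.pow 2).add (hQ.pow 2)).add ((hT.pow 2).const_mul (c^2))
  have hsq : HasDerivAt (fun s => Real.sqrt (P s ^ 2 + Q s ^ 2 + c ^ 2 * T s ^ 2))
      ((1 / (2 * Real.sqrt (P w ^ 2 + Q w ^ 2 + c ^ 2 * T w ^ 2))) *
        ((2 * P w ^ 1 * p' + 2 * Q w ^ 1 * q') + c ^ 2 * (2 * T w ^ 1 * t'))) w := by
    exact (Real.hasDerivAt_sqrt hEpos.ne').comp w hE
  have hgpos := gF_pos hpq (T w) c
  have hgne : Real.sqrt (P w ^ 2 + Q w ^ 2 + c ^ 2 * T w ^ 2) ≠ 0 := by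
    have : gF (P w) (Q w) (T w) c = Real.sqrt (P w ^ 2 + Q w ^ 2 + c ^ 2 * T w ^ 2) := by
      unfold gF eF; ring_nf
    rw [← this]; exact hgpos.ne'
  have := hT.div hsq hgne
  refine HasDerivAt.congr_deriv this ?_
  simp only [DF, gF, eF]
  set G := Real.sqrt (P w ^ 2 + Q w ^ 2 + c ^ 2 * T w ^ 2) with hG
  have hG2 : G^2 = P w ^ 2 + Q w ^ 2 + c ^ 2 * T w ^ 2 := Real.sq_sqrt hEpos.le
  have hGne : G ≠ 0 := hgne
  rw [← hG2]
  field_simp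

lemma lineDiff1 {G : ℝ × ℝ × ℝ → ℝ} (hG : Differentiable ℝ G) (a b c : ℝ) :
    HasDerivAt (fun s => G (s, b, c)) (fderiv ℝ G (a, b, c) (1, 0, 0)) a :=
  (hG (a, b, c)).hasFDerivAt.comp_hasDerivAt a
    ((hasDerivAt_id a).prodMk (hasDerivAt_const a (b, c)))

lemma lineDiff2 {G : ℝ × ℝ × ℝ → ℝ} (hG : Differentiable ℝ G) (a b c : ℝ) :
    HasDerivAt (fun s => G (a, s, c)) (fderiv ℝ G (a, b, c) (0, 1, 0)) b :=
  (hG (a, b, c)).hasFDerivAt.comp_hasDerivAt b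
    ((hasDerivAt_const b a).prodMk ((hasDerivAt_id b).prodMk (hasDerivAt_const b c)))

lemma lineDiff3 {G : ℝ × ℝ × ℝ → ℝ} (hG : Differentiable ℝ G) (a b c : ℝ) :
    HasDerivAt (fun s => G (a, b, s)) (fderiv ℝ G (a, b, c) (0, 0, 1)) c :=
  (hG (a, b, c)).hasFDerivAt.comp_hasDerivAt c
    ((hasDerivAt_const c a).prodMk ((hasDerivAt_const c b).prodMk (hasDerivAt_id c)))

variable {u : ℝ → ℝ → ℝ → ℝ}

lemma diff_F (hu : ContDiff ℝ 2 (fun v : ℝ × ℝ × ℝ => u v.1 v.2.1 v.2.2)) (e : ℝ × ℝ × ℝ) :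
    Differentiable ℝ (fun v => fderiv ℝ (fun v : ℝ × ℝ × ℝ => u v.1 v.2.1 v.2.2) v e) := fun v =>
  (((hu.fderiv_right (m := 1) (by norm_num)).differentiable one_ne_zero) v).clm_apply (differentiableAt_const e)

lemma diff_U (hu : ContDiff ℝ 2 (fun v : ℝ × ℝ × ℝ => u v.1 v.2.1 v.2.2)) :
    Differentiable ℝ (fun v : ℝ × ℝ × ℝ => u v.1 v.2.1 v.2.2) :=
  hu.differentiable (by norm_num)

lemma d1_eq (hu : ContDiff ℝ 2 (fun v : ℝ × ℝ × ℝ => u v.1 v.2.1 v.2.2)) (a b c : ℝ) :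
    deriv (fun s => u s b c) a
      = fderiv ℝ (fun v : ℝ × ℝ × ℝ => u v.1 v.2.1 v.2.2) (a, b, c) (1, 0, 0) :=
  (lineDiff1 (diff_U hu) a b c).deriv

lemma d2_eq (hu : ContDiff ℝ 2 (fun v : ℝ × ℝ × ℝ => u v.1 v.2.1 v.2.2)) (a b c : ℝ) :
    deriv (fun s => u a s c) b
      = fderiv ℝ (fun v : ℝ × ℝ × ℝ => u v.1 v.2.1 v.2.2) (a, b, c) (0, 1, 0) :=
  (lineDiff2 (diff_U hu) a b c).deriv

lemma d3_eq (hu : ContDiff ℝ 2 (fun v : ℝ × ℝ × ℝ => u v.1 v.2.1 v.2.2)) (a b c : ℝ) :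
    deriv (fun s => u a b s) c
      = fderiv ℝ (fun v : ℝ × ℝ × ℝ => u v.1 v.2.1 v.2.2) (a, b, c) (0, 0, 1) :=
  (lineDiff3 (diff_U hu) a b c).deriv

lemma diff_X1u (hu : ContDiff ℝ 2 (fun v : ℝ × ℝ × ℝ => u v.1 v.2.1 v.2.2)) :
    Differentiable ℝ (fun v : ℝ × ℝ × ℝ => X1 u v.1 v.2.1 v.2.2) := by
  have : (fun v : ℝ × ℝ × ℝ => X1 u v.1 v.2.1 v.2.2)
      = fun v : ℝ × ℝ × ℝ =>
        fderiv ℝ (fun v : ℝ × ℝ × ℝ => u v.1 v.2.1 v.2.2) v (1, 0, 0)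
        - (v.2.1 / 2) * fderiv ℝ (fun v : ℝ × ℝ × ℝ => u v.1 v.2.1 v.2.2) v (0, 0, 1) := by
    funext v
    rw [X1, d1_eq hu, d3_eq hu]
  rw [this]
  apply (diff_F hu _).sub
  apply Differentiable.mul _ (diff_F hu _)
  exact (by fun_prop : Differentiable ℝ (fun v : ℝ × ℝ × ℝ => v.2.1 / 2))

lemma diff_X2u (hu : ContDiff ℝ 2 (fun v : ℝ × ℝ × ℝ => u v.1 v.2.1 v.2.2)) :
    Differentiable ℝ (fun v : ℝ × ℝ × ℝ => X2 u v.1 v.2.1 v.2.2) := by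
  have : (fun v : ℝ × ℝ × ℝ => X2 u v.1 v.2.1 v.2.2)
      = fun v : ℝ × ℝ × ℝ =>
        fderiv ℝ (fun v : ℝ × ℝ × ℝ => u v.1 v.2.1 v.2.2) v (0, 1, 0)
        + (v.1 / 2) * fderiv ℝ (fun v : ℝ × ℝ × ℝ => u v.1 v.2.1 v.2.2) v (0, 0, 1) := by
    funext v
    rw [X2, d2_eq hu, d3_eq hu]
  rw [this]
  apply (diff_F hu _).add
  apply Differentiable.mul _ (diff_F hu _)
  exact (by fun_prop : Differentiable ℝ (fun v : ℝ × ℝ × ℝ => v.1 / 2))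

lemma diff_X3u (hu : ContDiff ℝ 2 (fun v : ℝ × ℝ × ℝ => u v.1 v.2.1 v.2.2)) :
    Differentiable ℝ (fun v : ℝ × ℝ × ℝ => X3 u v.1 v.2.1 v.2.2) := by
  have : (fun v : ℝ × ℝ × ℝ => X3 u v.1 v.2.1 v.2.2)
      = fun v : ℝ × ℝ × ℝ =>
        fderiv ℝ (fun v : ℝ × ℝ × ℝ => u v.1 v.2.1 v.2.2) v (0, 0, 1) := by
    funext v
    rw [X3, d3_eq hu]
  rw [this]
  exact diff_F hu _

end aux

theorem gaussian_curvature_expansion_first_SvK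
    (u pb qb uol : ℝ → ℝ → ℝ → ℝ) (rbF rol : ℝ → ℝ → ℝ → ℝ → ℝ)
    (lL h11 h12 h21 h22 K : ℝ → ℝ) (l0 Kinf x y z : ℝ)
    (hu : ContDiff ℝ 2 (fun v : ℝ × ℝ × ℝ => u v.1 v.2.1 v.2.2))
    (hx : u x y z = 0)
    (hl0 : l0 = Real.sqrt ((X1 u x y z)^2 + (X2 u x y z)^2))
    (hnc : l0 ≠ 0)
    (hpb : ∀ a b c, pb a b c = X1 u a b c / Real.sqrt ((X1 u a b c)^2 + (X2 u a b c)^2))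
    (hqb : ∀ a b c, qb a b c = X2 u a b c / Real.sqrt ((X1 u a b c)^2 + (X2 u a b c)^2))
    (huol : ∀ a b c, uol a b c = X3 u a b c / Real.sqrt ((X1 u a b c)^2 + (X2 u a b c)^2))
    (hrbF : ∀ L a b c, rbF L a b c = (X3 u a b c / Real.sqrt L) /
      Real.sqrt ((X1 u a b c)^2 + (X2 u a b c)^2 + (X3 u a b c / Real.sqrt L)^2))
    (hrol : ∀ L a b c, rol L a b c = (X3 u a b c / Real.sqrt L) /
      Real.sqrt ((X1 u a b c)^2 + (X2 u a b c)^2))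
    (hlL : ∀ L, lL L = Real.sqrt ((X1 u x y z)^2 + (X2 u x y z)^2
      + (X3 u x y z / Real.sqrt L)^2))
    (hh11 : ∀ L, h11 L = (l0 / lL L) * (X1 pb x y z + X2 qb x y z))
    (hh12 : ∀ L, h12 L = -(lL L / l0) * (qb x y z * X1 (rbF L) x y z
      - pb x y z * X2 (rbF L) x y z))
    (hh21 : ∀ L, h21 L = -(lL L / l0) * (qb x y z * X1 (rbF L) x y z
      - pb x y z * X2 (rbF L) x y z) - Real.sqrt L / 2
      - (Real.sqrt L / 2) * (rbF L x y z)^2)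
    (hh22 : ∀ L, h22 L = -(l0^2 / (lL L)^2) * (rbF L x y z * pb x y z * X1 (rol L) x y z
      + rbF L x y z * qb x y z * X2 (rol L) x y z)
      + (1 / Real.sqrt L) * X3 (rbF L) x y z)
    (hK : ∀ L, K L = -(L / 2) * (rbF L x y z)^2 + h11 L * h22 L - h12 L * h21 L)
    (hKinf : Kinf = -(1/2) * (qb x y z * X1 uol x y z - pb x y z * X2 uol x y z)
      - (X3 u x y z)^2 / (2 * ((X1 u x y z)^2 + (X2 u x y z)^2))) :
    ∃ C : ℝ, 0 ≤ C ∧ ∃ L₀ : ℝ, 0 < L₀ ∧ ∀ L : ℝ, L₀ ≤ L →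
      |K L - Kinf| ≤ C / Real.sqrt L := by
  have hpq : 0 < (X1 u x y z)^2 + (X2 u x y z)^2 := by
    rcases (by positivity : (0:ℝ) ≤ (X1 u x y z)^2 + (X2 u x y z)^2).lt_or_eq with h | h
    · exact h
    · exact absurd (by rw [hl0, ← h, Real.sqrt_zero]) hnc
  -- nine directional derivatives of X1 u, X2 u, X3 u at the point
  obtain ⟨p1, hp1⟩ : ∃ d, HasDerivAt (fun s => X1 u s y z) d x :=
    ⟨_, lineDiff1 (diff_X1u hu) x y z⟩
  obtain ⟨q1, hq1⟩ : ∃ d, HasDerivAt (fun s => X2 u s y z) d x :=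
    ⟨_, lineDiff1 (diff_X2u hu) x y z⟩
  obtain ⟨t1, ht1⟩ : ∃ d, HasDerivAt (fun s => X3 u s y z) d x :=
    ⟨_, lineDiff1 (diff_X3u hu) x y z⟩
  obtain ⟨p2, hp2⟩ : ∃ d, HasDerivAt (fun s => X1 u x s z) d y :=
    ⟨_, lineDiff2 (diff_X1u hu) x y z⟩
  obtain ⟨q2, hq2⟩ : ∃ d, HasDerivAt (fun s => X2 u x s z) d y :=
    ⟨_, lineDiff2 (diff_X2u hu) x y z⟩
  obtain ⟨t2, ht2⟩ : ∃ d, HasDerivAt (fun s => X3 u x s z) d y :=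
    ⟨_, lineDiff2 (diff_X3u hu) x y z⟩
  obtain ⟨p3, hp3⟩ : ∃ d, HasDerivAt (fun s => X1 u x y s) d z :=
    ⟨_, lineDiff3 (diff_X1u hu) x y z⟩
  obtain ⟨q3, hq3⟩ : ∃ d, HasDerivAt (fun s => X2 u x y s) d z :=
    ⟨_, lineDiff3 (diff_X2u hu) x y z⟩
  obtain ⟨t3, ht3⟩ : ∃ d, HasDerivAt (fun s => X3 u x y s) d z :=
    ⟨_, lineDiff3 (diff_X3u hu) x y z⟩
  -- chain-rule derivatives of the normalized quantity along the three lines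
  have hH1 : ∀ c : ℝ, HasDerivAt (fun s => X3 u s y z /
      Real.sqrt ((X1 u s y z)^2 + (X2 u s y z)^2 + c^2 * (X3 u s y z)^2))
      (DF (X1 u x y z) (X2 u x y z) (X3 u x y z) p1 q1 t1 c) x :=
    fun c => hasDerivAt_H c hp1 hq1 ht1 hpq
  have hH2 : ∀ c : ℝ, HasDerivAt (fun s => X3 u x s z /
      Real.sqrt ((X1 u x s z)^2 + (X2 u x s z)^2 + c^2 * (X3 u x s z)^2))
      (DF (X1 u x y z) (X2 u x y z) (X3 u x y z) p2 q2 t2 c) y :=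
    fun c => hasDerivAt_H c hp2 hq2 ht2 hpq
  have hH3 : ∀ c : ℝ, HasDerivAt (fun s => X3 u x y s /
      Real.sqrt ((X1 u x y s)^2 + (X2 u x y s)^2 + c^2 * (X3 u x y s)^2))
      (DF (X1 u x y z) (X2 u x y z) (X3 u x y z) p3 q3 t3 c) z :=
    fun c => hasDerivAt_H c hp3 hq3 ht3 hpq
  -- the uol derivatives
  have huol1 : (fun s => uol s y z) = fun s => X3 u s y z /
      Real.sqrt ((X1 u s y z)^2 + (X2 u s y z)^2 + (0:ℝ)^2 * (X3 u s y z)^2) := by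
    funext s; rw [huol]; norm_num
  have huol2 : (fun s => uol x s z) = fun s => X3 u x s z /
      Real.sqrt ((X1 u x s z)^2 + (X2 u x s z)^2 + (0:ℝ)^2 * (X3 u x s z)^2) := by
    funext s; rw [huol]; norm_num
  have huol3 : (fun s => uol x y s) = fun s => X3 u x y s /
      Real.sqrt ((X1 u x y s)^2 + (X2 u x y s)^2 + (0:ℝ)^2 * (X3 u x y s)^2) := by
    funext s; rw [huol]; norm_num
  have hB1 : X1 uol x y z = WF (X1 u x y z) (X2 u x y z) (X3 u x y z) p1 q1 t1 p3 q3 t3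
      (-(y/2)) 0 := by
    rw [X1, huol1, huol3, (hH1 0).deriv, (hH3 0).deriv]
    unfold WF; ring
  have hB2 : X2 uol x y z = WF (X1 u x y z) (X2 u x y z) (X3 u x y z) p2 q2 t2 p3 q3 t3
      (x/2) 0 := by
    rw [X2, huol2, huol3, (hH2 0).deriv, (hH3 0).deriv]
    unfold WF; ring
  set Ψ : ℝ → ℝ := PsiF (X1 u x y z) (X2 u x y z) (X3 u x y z) l0
      (X1 pb x y z + X2 qb x y z) (pb x y z) (qb x y z) x y p1 q1 t1 p2 q2 t2 p3 q3 t3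
    with hΨ
  have hKinfΨ : Kinf = Ψ 0 := by
    rw [hΨ, PsiF_zero hpq hl0, hKinf, hB1, hB2]
  have hKeq : ∀ L : ℝ, 1 ≤ L → K L = Ψ ((Real.sqrt L)⁻¹) := by
    intro L hL1
    have hLpos : (0:ℝ) < L := lt_of_lt_of_le one_pos hL1
    have hsL : 0 < Real.sqrt L := Real.sqrt_pos.2 hLpos
    set σ := (Real.sqrt L)⁻¹ with hσdef
    have hσpos : 0 < σ := inv_pos.2 hsL
    have hsLσ : Real.sqrt L = σ⁻¹ := by rw [hσdef, inv_inv]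
    have hLσ : L = (σ⁻¹)^2 := by rw [← hsLσ, Real.sq_sqrt hLpos.le]
    have hdiv : ∀ a b c : ℝ, X3 u a b c / Real.sqrt L = X3 u a b c * σ := fun a b c => by
      rw [div_eq_mul_inv, ← hσdef]
    have hgpos := gF_pos hpq (X3 u x y z) σ
    have hepos := eF_pos hpq (X3 u x y z) σ
    have hg2 := gF_sq hpq (X3 u x y z) σ
    -- pointwise identities for rbF along the three lines
    have hrb1 : (fun s => rbF L s y z) = fun s => σ * (X3 u s y z /
        Real.sqrt ((X1 u s y z)^2 + (X2 u s y z)^2 + σ^2 * (X3 u s y z)^2)) := by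
      funext s
      rw [hrbF, hdiv]
      rw [show (X3 u s y z * σ)^2 = σ^2 * (X3 u s y z)^2 by ring,
        mul_comm (X3 u s y z) σ, mul_div_assoc]
    have hrb2 : (fun s => rbF L x s z) = fun s => σ * (X3 u x s z /
        Real.sqrt ((X1 u x s z)^2 + (X2 u x s z)^2 + σ^2 * (X3 u x s z)^2)) := by
      funext s
      rw [hrbF, hdiv]
      rw [show (X3 u x s z * σ)^2 = σ^2 * (X3 u x s z)^2 by ring,
        mul_comm (X3 u x s z) σ, mul_div_assoc]
    have hrb3 : (fun s => rbF L x y s) = fun s => σ * (X3 u x y s /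
        Real.sqrt ((X1 u x y s)^2 + (X2 u x y s)^2 + σ^2 * (X3 u x y s)^2)) := by
      funext s
      rw [hrbF, hdiv]
      rw [show (X3 u x y s * σ)^2 = σ^2 * (X3 u x y s)^2 by ring,
        mul_comm (X3 u x y s) σ, mul_div_assoc]
    -- derivatives of rbF
    have hX1rb : X1 (rbF L) x y z = σ * WF (X1 u x y z) (X2 u x y z) (X3 u x y z)
        p1 q1 t1 p3 q3 t3 (-(y/2)) σ := by
      rw [X1, hrb1, hrb3, deriv_const_mul_field, deriv_const_mul_field,
        (hH1 σ).deriv, (hH3 σ).deriv]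
      unfold WF; ring
    have hX2rb : X2 (rbF L) x y z = σ * WF (X1 u x y z) (X2 u x y z) (X3 u x y z)
        p2 q2 t2 p3 q3 t3 (x/2) σ := by
      rw [X2, hrb2, hrb3, deriv_const_mul_field, deriv_const_mul_field,
        (hH2 σ).deriv, (hH3 σ).deriv]
      unfold WF; ring
    have hX3rb : X3 (rbF L) x y z = σ * DF (X1 u x y z) (X2 u x y z) (X3 u x y z)
        p3 q3 t3 σ := by
      rw [X3, hrb3, deriv_const_mul_field, (hH3 σ).deriv]
    -- rol is σ times uol
    have hro1 : (fun s => rol L s y z) = fun s => σ * uol s y z := by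
      funext s; rw [hrol, hdiv, huol, mul_comm (X3 u s y z) σ, mul_div_assoc]
    have hro2 : (fun s => rol L x s z) = fun s => σ * uol x s z := by
      funext s; rw [hrol, hdiv, huol, mul_comm (X3 u x s z) σ, mul_div_assoc]
    have hro3 : (fun s => rol L x y s) = fun s => σ * uol x y s := by
      funext s; rw [hrol, hdiv, huol, mul_comm (X3 u x y s) σ, mul_div_assoc]
    have hX1ro : X1 (rol L) x y z = σ * X1 uol x y z := by
      rw [X1, hro1, hro3, deriv_const_mul_field, deriv_const_mul_field, X1]; ring
    have hX2ro : X2 (rol L) x y z = σ * X2 uol x y z := by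
      rw [X2, hro2, hro3, deriv_const_mul_field, deriv_const_mul_field, X2]; ring
    -- point values
    have hgσ : lL L = gF (X1 u x y z) (X2 u x y z) (X3 u x y z) σ := by
      rw [hlL, hdiv]; unfold gF eF; congr 1; ring
    have hrbv : rbF L x y z = σ * X3 u x y z
        / gF (X1 u x y z) (X2 u x y z) (X3 u x y z) σ := by
      rw [hrbF, hdiv]
      rw [show (X1 u x y z)^2 + (X2 u x y z)^2 + (X3 u x y z * σ)^2
        = eF (X1 u x y z) (X2 u x y z) (X3 u x y z) σ by unfold eF; ring]
      rw [mul_comm (X3 u x y z) σ]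
      rfl
    -- the five pieces
    have e1 : h11 L = l0 / gF (X1 u x y z) (X2 u x y z) (X3 u x y z) σ
        * (X1 pb x y z + X2 qb x y z) := by
      rw [hh11, hgσ]
    have e2 : h12 L = σ * MF (X1 u x y z) (X2 u x y z) (X3 u x y z) l0 (pb x y z)
        (qb x y z) x y p1 q1 t1 p2 q2 t2 p3 q3 t3 σ := by
      rw [hh12, hgσ, hX1rb, hX2rb]; unfold MF; ring
    have e3 : h21 L = σ * MF (X1 u x y z) (X2 u x y z) (X3 u x y z) l0 (pb x y z)
        (qb x y z) x y p1 q1 t1 p2 q2 t2 p3 q3 t3 σ - σ⁻¹ / 2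
        - σ * (X3 u x y z)^2 / (2 * eF (X1 u x y z) (X2 u x y z) (X3 u x y z) σ) := by
      rw [hh21, hgσ, hX1rb, hX2rb, hrbv, hsLσ]
      unfold MF
      rw [← hg2]
      field_simp
    have e4 : h22 L = σ^2 * NF (X1 u x y z) (X2 u x y z) (X3 u x y z) l0 (pb x y z)
        (qb x y z) x y p1 q1 t1 p2 q2 t2 p3 q3 t3 σ := by
      rw [hh22, hgσ, hrbv, hX1ro, hX2ro, hX3rb, hB1, hB2, hsLσ]
      unfold NF
      rw [← hg2]
      field_simp
    have e5 : -(L/2) * (rbF L x y z)^2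
        = -(X3 u x y z)^2 / (2 * eF (X1 u x y z) (X2 u x y z) (X3 u x y z) σ) := by
      rw [hrbv, hLσ, ← hg2]
      field_simp
    rw [hK, e5, e1, e2, e3, e4, hΨ]
    unfold PsiF
    rw [← hg2]
    field_simp
  -- differentiability of Ψ at 0 gives the rate
  have hd : HasDerivAt Ψ (deriv Ψ 0) 0 := ((diff_PsiF hpq) 0).hasDerivAt
  set d := deriv Ψ 0 with hddef
  have hslope := hasDerivAt_iff_tendsto_slope.1 hd
  have h1 : ∀ᶠ σ in nhdsWithin (0:ℝ) {(0:ℝ)}ᶜ, dist (slope Ψ 0 σ) d < 1 :=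
    Metric.tendsto_nhds.mp hslope 1 one_pos
  rw [eventually_nhdsWithin_iff, Metric.eventually_nhds_iff] at h1
  obtain ⟨δ, hδpos, hδ⟩ := h1
  refine ⟨|d| + 1, by positivity, max 1 (δ⁻¹^2 + 1), lt_of_lt_of_le one_pos (le_max_left _ _),
    fun L hL => ?_⟩
  have hL1 : (1:ℝ) ≤ L := le_trans (le_max_left _ _) hL
  have hLpos : (0:ℝ) < L := lt_of_lt_of_le one_pos hL1
  have hsL : 0 < Real.sqrt L := Real.sqrt_pos.2 hLpos
  set σ := (Real.sqrt L)⁻¹ with hσdef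
  have hσpos : 0 < σ := inv_pos.2 hsL
  have hσδ : σ < δ := by
    have h2 : δ⁻¹^2 + 1 ≤ L := le_trans (le_max_right _ _) hL
    have h3 : δ⁻¹ < Real.sqrt L := by
      have : δ⁻¹ = Real.sqrt (δ⁻¹^2) := (Real.sqrt_sq (by positivity)).symm
      rw [this]
      exact Real.sqrt_lt_sqrt (by positivity) (by linarith)
    have h4 : σ < (δ⁻¹)⁻¹ := by
      rw [hσdef]
      exact inv_strictAnti₀ (by positivity) h3
    rwa [inv_inv] at h4
  have hmem : σ ∈ ({(0:ℝ)}ᶜ : Set ℝ) := by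
    simp [hσpos.ne']
  have hdist : dist σ (0:ℝ) < δ := by
    rw [Real.dist_eq, sub_zero, abs_of_pos hσpos]; exact hσδ
  have h5 := hδ hdist hmem
  rw [Real.dist_eq] at h5
  have hsl : slope Ψ 0 σ = (Ψ σ - Ψ 0) / σ := by
    rw [slope_def_field]; rw [sub_zero]
  have h6 : |Ψ σ - Ψ 0| = |slope Ψ 0 σ| * σ := by
    rw [hsl, abs_div, abs_of_pos hσpos]
    field_simp
  have h7 : |slope Ψ 0 σ| ≤ |d| + 1 := by
    have := abs_sub_abs_le_abs_sub (slope Ψ 0 σ) d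
    linarith [le_of_lt h5]
  calc |K L - Kinf| = |Ψ σ - Ψ 0| := by rw [hKeq L hL1, hKinfΨ]
    _ = |slope Ψ 0 σ| * σ := h6
    _ ≤ (|d| + 1) * σ := mul_le_mul_of_nonneg_right h7 hσpos.le
    _ = (|d| + 1) / Real.sqrt L := by rw [hσdef, div_eq_mul_inv]
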